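/- Let X be a real Banach space, A : X → ℝ and write, for U, Ũ ∈ X with e = U − Ũ, the function g(s) = A(Ũ + s·e). If A is three times continuously Fréchet differentiable, then A(U) − A(Ũ) = (1/2)(A'(Ũ)(e) + A'(U)(e)) + (1/2)∫₀¹ A'''(Ũ + s e)(e, e, e) · s(s−1) ds. -/

import Mathlib

open intervalIntegral

theorem dwr_error_representation
    {X : Type*} [NormedAddCommGroup X] [NormedSpace ℝ X] [CompleteSpace X]
    (A : X → ℝ) (hA : ContDiff ℝ 3 A) (U Ut : X) (e : X) (he : e = U - Ut) :
    A U - A Ut = (1/2) * (fderiv ℝ A Ut e + fderiv ℝ A U e)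
      + (1/2) * ∫ s in (0:ℝ)..1,
          (iteratedFDeriv ℝ 3 A (Ut + s • e) ![e, e, e]) * (s * (s - 1)) := by
  -- the line
  set l : ℝ → X := fun t => Ut + t • e with hl
  have hline : ∀ s : ℝ, HasDerivAt l e s := by
    intro s
    exact (by simpa using ((hasDerivAt_id s).smul_const e).const_add Ut :
      HasDerivAt (fun t => Ut + t • e) e s)
  -- generic derivative lemma for iterated derivatives along the line
  have key : ∀ (k : ℕ), k ≤ 2 → ∀ (v : Fin k → X) (s : ℝ),
      HasDerivAt (fun t => iteratedFDeriv ℝ k A (l t) v)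
        (iteratedFDeriv ℝ (k+1) A (l s) (Fin.cons e v)) s := by
    intro k hk v s
    have hC : ContDiff ℝ 1 (iteratedFDeriv ℝ k A) := by
      apply hA.iteratedFDeriv_right
      exact_mod_cast (by omega : 1 + k ≤ 3)
    have hd : HasFDerivAt (iteratedFDeriv ℝ k A)
        (fderiv ℝ (iteratedFDeriv ℝ k A) (l s)) (l s) :=
      (hC.differentiable one_ne_zero (l s)).hasFDerivAt
    have h1 : HasDerivAt (fun t => iteratedFDeriv ℝ k A (l t))
        (fderiv ℝ (iteratedFDeriv ℝ k A) (l s) e) s :=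
      hd.comp_hasDerivAt s (hline s)
    have h2 := ((ContinuousMultilinearMap.apply ℝ (fun _ : Fin k => X) ℝ
        v).hasFDerivAt.comp_hasDerivAt s h1)
    simp only [ContinuousMultilinearMap.apply_apply] at h2
    have : (fderiv ℝ (iteratedFDeriv ℝ k A) (l s) e) v
        = iteratedFDeriv ℝ (k+1) A (l s) (Fin.cons e v) := by
      rw [iteratedFDeriv_succ_apply_left]
      simp
    rw [← this]
    exact h2
  -- abbreviations
  set g1 : ℝ → ℝ := fun s => iteratedFDeriv ℝ 1 A (l s) ![e] with hg1
  set g2 : ℝ → ℝ := fun s => iteratedFDeriv ℝ 2 A (l s) ![e, e] with hg2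
  set g3 : ℝ → ℝ := fun s => iteratedFDeriv ℝ 3 A (l s) ![e, e, e] with hg3
  have hd0 : ∀ s : ℝ, HasDerivAt (fun t => A (l t)) (g1 s) s := by
    intro s
    have := key 0 (by norm_num) ![] s
    simp only [iteratedFDeriv_zero_apply] at this
    convert this using 2
    rfl
  have hd1 : ∀ s : ℝ, HasDerivAt g1 (g2 s) s := by
    intro s
    have := key 1 (by norm_num) ![e] s
    convert this using 2
    rfl
  have hd2 : ∀ s : ℝ, HasDerivAt g2 (g3 s) s := by
    intro s
    have := key 2 (by norm_num) ![e, e] s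
    convert this using 2
    rfl
  -- auxiliary function
  set F : ℝ → ℝ := fun s => A (l s) - (s - 1/2) * g1 s + (s * (s-1)/2) * g2 s with hF
  have hdF : ∀ s : ℝ, HasDerivAt F (s * (s-1)/2 * g3 s) s := by
    intro s
    have h1 : HasDerivAt (fun t : ℝ => (t - 1/2) * g1 t)
        (1 * g1 s + (s - 1/2) * g2 s) s :=
      (((hasDerivAt_id s).sub_const (1/2))).mul (hd1 s)
    have h2 : HasDerivAt (fun t : ℝ => (t * (t-1)/2) * g2 t)
        ((s - 1/2) * g2 s + (s * (s-1)/2) * g3 s) s := by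
      have hw : HasDerivAt (fun t : ℝ => t * (t-1)/2) (s - 1/2) s := by
        have := (((hasDerivAt_id s).mul ((hasDerivAt_id s).sub_const 1)).div_const 2)
        refine this.congr_deriv ?_
        simp; ring
      have := hw.mul (hd2 s)
      refine this.congr_deriv ?_
      rfl
    have := ((hd0 s).sub h1).add h2
    refine this.congr_deriv ?_
    ring
  -- continuity of the integrand
  have hcont : Continuous fun s : ℝ => s * (s-1)/2 * g3 s := by
    have h3 : Continuous g3 := by
      have : Continuous (iteratedFDeriv ℝ 3 A) :=
        (hA.iteratedFDeriv_right (m := 0) (i := 3) (by norm_num)).continuous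
      exact ((ContinuousMultilinearMap.apply ℝ (fun _ : Fin 3 => X) ℝ
        ![e, e, e]).continuous.comp (this.comp (by continuity)))
    fun_prop
  have hint : ∫ s in (0:ℝ)..1, s * (s-1)/2 * g3 s = F 1 - F 0 :=
    integral_eq_sub_of_hasDerivAt (fun s _ => hdF s)
      (hcont.intervalIntegrable 0 1)
  -- evaluate endpoints
  have hl0 : l 0 = Ut := by simp [hl]
  have hl1 : l 1 = U := by simp [hl, he]
  have hg1f : ∀ s, g1 s = fderiv ℝ A (l s) e := by
    intro s; rw [hg1]; simp [iteratedFDeriv_one_apply]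
  have hF1 : F 1 = A U - (1/2) * fderiv ℝ A U e := by
    rw [hF]; simp only [hg1f, hl1]; ring
  have hF0 : F 0 = A Ut + (1/2) * fderiv ℝ A Ut e := by
    rw [hF]; simp only [hg1f, hl0]; ring
  -- relate the two integrals
  have hint2 : ∫ s in (0:ℝ)..1, g3 s * (s * (s-1))
      = 2 * ∫ s in (0:ℝ)..1, s * (s-1)/2 * g3 s := by
    rw [← intervalIntegral.integral_const_mul]
    apply intervalIntegral.integral_congr
    intro s _
    ring
  have : ∫ s in (0:ℝ)..1, g3 s * (s * (s-1)) = 2 * (F 1 - F 0) := by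
    rw [hint2, hint]
  rw [hg3] at this
  rw [this, hF1, hF0]
  ring
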